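/- Let a, a′ : ℕ → ℝ and b : ℕ → ℝ be sequences of positive numbers with s := ∑_{k=0}^∞ 1/a(k) < ∞ and t := ∑_{i=0}^∞ a′(i)/b(i)² < ∞, let c : ℕ → ℝ and κ > 0 satisfy κ ≤ ∏_{j=M}^{N} c(j) ≤ 1/κ for all natural numbers M ≤ N, let g : ℕ → ℂ satisfy ∑_{i=0}^∞ |g(i)|²/a′(i) < ∞, and let α ∈ ℂ. Then for every k the series ∑_{i=k}^∞ (1/b(i))·(∏_{j=k}^{i−1} c(j))·g(i) converges absolutely, and the function f(k) := (∏_{i=0}^{k−1} 1/c(i))·α − ∑_{i=k}^∞ (1/b(i))·(∏_{j=k}^{i−1} c(j))·g(i) satisfies b(k)(f(k) − c(k)f(k+1)) = −g(k) for all k ≥ 0 and ∑_{k=0}^∞ |f(k)|²/a(k) < ∞, i.e. f ∈ ℓ²_a. -/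

import Mathlib

open Finset

/-- the general solution `f` of the Jacobi type equation `Āf = -g`:
the tail series converges absolutely for every `k`, `f` solves the difference
equation, and `f` lies in the weighted space `ℓ²_a`. -/
theorem jacobi_Abar_solution (a a' b c : ℕ → ℝ) (κ : ℝ) (g : ℕ → ℂ) (α : ℂ)
    (ha : ∀ k, 0 < a k) (ha' : ∀ k, 0 < a' k) (hb : ∀ k, 0 < b k)
    (hs : Summable fun k => 1 / a k)
    (ht : Summable fun i => a' i / (b i)^2)
    (hκ : 0 < κ)
    (hc : ∀ M N : ℕ, M ≤ N →
      κ ≤ ∏ j ∈ Finset.Icc M N, c j ∧ ∏ j ∈ Finset.Icc M N, c j ≤ 1 / κ)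
    (hg : Summable fun i => ‖g i‖^2 / a' i)
    (f : ℕ → ℂ)
    (hf : ∀ k, f k = (∏ i ∈ Finset.range k, ((c i : ℂ))⁻¹) * α -
      ∑' i : ℕ, if k ≤ i then
        (1 / (b i : ℂ)) * (∏ j ∈ Finset.Ico k i, (c j : ℂ)) * g i else 0) :
    (∀ k, Summable fun i : ℕ => ‖if k ≤ i then
        (1 / (b i : ℂ)) * (∏ j ∈ Finset.Ico k i, (c j : ℂ)) * g i else 0‖) ∧
    (∀ k, (b k : ℂ) * (f k - (c k : ℂ) * f (k+1)) = -g k) ∧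
    Summable (fun k => ‖f k‖^2 / a k) := by
  set e : ℕ → ℕ → ℂ := fun k i => if k ≤ i then
      (1 / (b i : ℂ)) * (∏ j ∈ Finset.Ico k i, (c j : ℂ)) * g i else 0 with he
  have hκ1 : κ ≤ 1 := by
    obtain ⟨h1, h2⟩ := hc 0 0 le_rfl
    simp only [Finset.Icc_self, Finset.prod_singleton] at h1 h2
    have h3 : κ ≤ 1 / κ := le_trans h1 h2
    rw [le_div_iff₀ hκ] at h3
    nlinarith
  have hprod : ∀ k i : ℕ, k ≤ i →
      κ ≤ ∏ j ∈ Finset.Ico k i, c j ∧ ∏ j ∈ Finset.Ico k i, c j ≤ 1 / κ := by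
    intro k i hki
    rcases eq_or_lt_of_le hki with rfl | hlt
    · simp only [Finset.Ico_self, Finset.prod_empty]
      refine ⟨hκ1, ?_⟩
      rw [le_div_iff₀ hκ]; nlinarith
    · obtain ⟨m, rfl⟩ : ∃ m, i = m + 1 := ⟨i - 1, by omega⟩
      rw [Finset.Ico_add_one_right_eq_Icc]
      exact hc k m (by omega)
  -- the comparison sequence
  have hhnn : ∀ i, 0 ≤ ‖g i‖ / b i := fun i => div_nonneg (norm_nonneg _) (hb i).le
  have hhsum : Summable (fun i => ‖g i‖ / b i) := by
    refine Summable.of_nonneg_of_le hhnn (fun i => ?_)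
      ((hg.add ht).div_const 2)
    have hb' := hb i; have ha'' := ha' i
    rw [div_le_div_iff₀ (hb i) two_pos, div_add_div _ _ (ne_of_gt ha'') (by positivity),
      div_mul_eq_mul_div, le_div_iff₀ (by positivity)]
    nlinarith [sq_nonneg (‖g i‖ * b i - a' i), norm_nonneg (g i)]
  -- norm computation for e
  have hnorm : ∀ k i, k ≤ i → ‖e k i‖ = (1 / b i) * (∏ j ∈ Finset.Ico k i, c j) * ‖g i‖ := by
    intro k i hki
    have hpos := (hprod k i hki).1
    rw [he]
    simp only [if_pos hki]
    rw [norm_mul, norm_mul]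
    have h1 : ((1 : ℂ) / (b i : ℂ)) = ((1 / b i : ℝ) : ℂ) := by push_cast; ring
    have h2 : (∏ j ∈ Finset.Ico k i, (c j : ℂ)) = ((∏ j ∈ Finset.Ico k i, c j : ℝ) : ℂ) := by
      push_cast; ring
    rw [h1, h2, Complex.norm_real, Complex.norm_real, Real.norm_eq_abs, Real.norm_eq_abs,
      abs_of_pos (one_div_pos.mpr (hb i)), abs_of_pos (by linarith)]
  have heknorm : ∀ k i, ‖e k i‖ ≤ (1 / κ) * (‖g i‖ / b i) := by
    intro k i
    by_cases hki : k ≤ i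
    · rw [hnorm k i hki]
      have h2 := (hprod k i hki).2
      have hb' := hb i
      calc (1 / b i) * (∏ j ∈ Finset.Ico k i, c j) * ‖g i‖
          ≤ (1 / b i) * (1 / κ) * ‖g i‖ := by
            apply mul_le_mul_of_nonneg_right _ (norm_nonneg _)
            exact mul_le_mul_of_nonneg_left h2 (by positivity)
        _ = (1 / κ) * (‖g i‖ / b i) := by ring
    · rw [he]; simp only [if_neg hki, norm_zero]
      exact mul_nonneg (by positivity) (hhnn i)
  have hek : ∀ k, Summable fun i => ‖e k i‖ := by
    intro k
    exact Summable.of_nonneg_of_le (fun i => norm_nonneg _) (heknorm k)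
      (hhsum.mul_left (1 / κ))
  have hekC : ∀ k, Summable (e k) := fun k => (hek k).of_norm
  have hcne : ∀ k, (c k : ℂ) ≠ 0 := by
    intro k
    have := (hc k k le_rfl).1
    simp only [Finset.Icc_self, Finset.prod_singleton] at this
    exact_mod_cast ne_of_gt (lt_of_lt_of_le hκ this)
  have hbne : ∀ k, (b k : ℂ) ≠ 0 := fun k => by exact_mod_cast ne_of_gt (hb k)
  have hf' : ∀ k, f k = (∏ i ∈ Finset.range k, ((c i : ℂ))⁻¹) * α - ∑' i, e k i :=
    fun k => hf k
  -- recursion for the tails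
  have hS : ∀ k, (∑' i, e k i) = (1 / (b k : ℂ)) * g k + (c k : ℂ) * ∑' i, e (k+1) i := by
    intro k
    have hsplit : ∀ i, e k i = (if i = k then (1 / (b k : ℂ)) * g k else 0)
        + (c k : ℂ) * e (k+1) i := by
      intro i
      rw [he]
      by_cases h1 : k ≤ i
      · rcases eq_or_lt_of_le h1 with rfl | h2
        · simp
        · have hne : ¬ (i = k) := by omega
          simp only [if_pos h1, if_pos (by omega : k + 1 ≤ i), if_neg hne, zero_add]
          rw [Finset.prod_eq_prod_Ico_succ_bot h2]
          ring
      · simp only [if_neg h1, if_neg (by omega : ¬ k + 1 ≤ i),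
          if_neg (by omega : ¬ i = k), mul_zero, add_zero]
    rw [tsum_congr hsplit,
      Summable.tsum_add ((hasSum_ite_eq k ((1 / (b k : ℂ)) * g k)).summable) ((hekC (k+1)).mul_left _),
      tsum_ite_eq k (fun _ => (1 / (b k : ℂ)) * g k), tsum_mul_left]
  refine ⟨hek, ?_, ?_⟩
  · intro k
    rw [hf' k, hf' (k+1)]
    have h2 : (c k : ℂ) * ((c k : ℂ))⁻¹ = 1 := mul_inv_cancel₀ (hcne k)
    have h1 : (b k : ℂ) * (1 / (b k : ℂ)) = 1 := by
      rw [mul_one_div, div_self (hbne k)]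
    rw [hS k, Finset.prod_range_succ]
    linear_combination (-((b k : ℂ) * (∏ i ∈ Finset.range k, ((c i : ℂ))⁻¹) * α)) * h2
      + (-(g k)) * h1
  · -- uniform bound on f
    set T : ℝ := ∑' i, ‖g i‖ / b i with hT
    have hTnn : 0 ≤ T := tsum_nonneg hhnn
    set B : ℝ := (1 / κ) * ‖α‖ + (1 / κ) * T with hB
    have hBnn : 0 ≤ B := by positivity
    have hfB : ∀ k, ‖f k‖ ≤ B := by
      intro k
      rw [hf' k]
      have hP : ‖∏ i ∈ Finset.range k, ((c i : ℂ))⁻¹‖ ≤ 1 / κ := by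
        have h2 : (∏ i ∈ Finset.range k, ((c i : ℂ))⁻¹)
            = (((∏ i ∈ Finset.range k, c i)⁻¹ : ℝ) : ℂ) := by
          rw [Complex.ofReal_inv, Complex.ofReal_prod, ← Finset.prod_inv_distrib]
        have hpk : κ ≤ ∏ i ∈ Finset.range k, c i := by
          have h3 := (hprod 0 k (Nat.zero_le k)).1
          rwa [← Finset.range_eq_Ico] at h3
        have hppos : 0 < ∏ i ∈ Finset.range k, c i := lt_of_lt_of_le hκ hpk
        rw [h2, Complex.norm_real, Real.norm_eq_abs, abs_of_pos (inv_pos.mpr hppos), one_div]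
        exact inv_anti₀ hκ hpk
      have hSb : ‖∑' i, e k i‖ ≤ (1 / κ) * T := by
        calc ‖∑' i, e k i‖ ≤ ∑' i, ‖e k i‖ := norm_tsum_le_tsum_norm (hek k)
          _ ≤ ∑' i, (1 / κ) * (‖g i‖ / b i) :=
            Summable.tsum_le_tsum (heknorm k) (hek k) (hhsum.mul_left _)
          _ = (1 / κ) * T := tsum_mul_left
      calc ‖(∏ i ∈ Finset.range k, ((c i : ℂ))⁻¹) * α - ∑' i, e k i‖
          ≤ ‖(∏ i ∈ Finset.range k, ((c i : ℂ))⁻¹) * α‖ + ‖∑' i, e k i‖ := norm_sub_le _ _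
        _ ≤ (1 / κ) * ‖α‖ + (1 / κ) * T := by
            rw [norm_mul]
            gcongr
        _ = B := rfl
    refine Summable.of_nonneg_of_le (fun k => div_nonneg (by positivity) (ha k).le) (fun k => ?_)
      (hs.mul_left (B ^ 2))
    have h1 : ‖f k‖ ^ 2 ≤ B ^ 2 := by
      apply pow_le_pow_left₀ (norm_nonneg _) (hfB k)
    rw [mul_one_div]
    gcongr
    exact (ha k).le
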